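/- arXiv:1301.6422 — 6 statements merged into one kernel-verified Lean document; each statement's English description precedes it below -/
import Mathlib

section
/- Let (K_n) and (P_n) be sequences of positive integers with 2K_n ≤ P_n for all n and K_n²/P_n → 0 as n → ∞, and set β_n := 1 − C(P_n − K_n, K_n)/C(P_n, K_n). Then β_n is asymptotically equivalent to K_n²/P_n, i.e. β_n · (P_n/K_n²) → 1 as n → ∞. -/
open Filter

private lemma dF_A {k p : ℕ} (hkp : 2 * k ≤ p) :
    (p - k).descFactorial k * p ^ k ≤ p.descFactorial k * (p - k) ^ k := by
  rw [Nat.descFactorial_eq_prod_range, Nat.descFactorial_eq_prod_range,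
    show p ^ k = ∏ _i ∈ Finset.range k, p from by simp,
    show (p - k) ^ k = ∏ _i ∈ Finset.range k, (p - k) from by simp,
    ← Finset.prod_mul_distrib, ← Finset.prod_mul_distrib]
  apply Finset.prod_le_prod'
  intro i hi
  rw [Finset.mem_range] at hi
  obtain ⟨a, ha⟩ : ∃ a, p = a + k + i := ⟨p - k - i, by omega⟩
  rw [show p - k - i = a by omega, show p - i = a + k by omega,
    show p - k = a + i by omega, ha]
  nlinarith

private lemma dF_B {k p : ℕ} (hkp : 2 * k ≤ p) :
    p.descFactorial k * (p - 2 * k) ^ k ≤ (p - k).descFactorial k * (p - k) ^ k := by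
  rw [Nat.descFactorial_eq_prod_range, Nat.descFactorial_eq_prod_range,
    show (p - 2 * k) ^ k = ∏ _i ∈ Finset.range k, (p - 2 * k) from by simp,
    show (p - k) ^ k = ∏ _i ∈ Finset.range k, (p - k) from by simp,
    ← Finset.prod_mul_distrib, ← Finset.prod_mul_distrib]
  apply Finset.prod_le_prod'
  intro i hi
  rw [Finset.mem_range] at hi
  obtain ⟨b, hb⟩ : ∃ b, p = b + 2 * k := ⟨p - 2 * k, by omega⟩
  obtain ⟨c, hc⟩ : ∃ c, k = c + i := ⟨k - i, by omega⟩
  rw [show p - i = b + c + k by omega, show p - 2 * k = b by omega,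
    show p - k - i = b + c by omega, show p - k = b + c + i by omega, hc]
  nlinarith

private lemma key_bounds {k p : ℕ} (hk : 1 ≤ k) (hkp : 2 * k ≤ p) :
    1 / (1 + (k : ℝ) ^ 2 / p) ≤
        (1 - ((p - k).choose k : ℝ) / (p.choose k : ℝ)) * ((p : ℝ) / (k : ℝ) ^ 2) ∧
      (1 - ((p - k).choose k : ℝ) / (p.choose k : ℝ)) * ((p : ℝ) / (k : ℝ) ^ 2) ≤
        (p : ℝ) / ((p : ℝ) - (k : ℝ)) := by
  have hk0 : (0:ℝ) < k := by exact_mod_cast hk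
  have hp0 : (0:ℝ) < p := by exact_mod_cast Nat.lt_of_lt_of_le (by omega) hkp
  have hkle : k ≤ p := by omega
  have hkpk : k ≤ p - k := by omega
  have hpk0 : (0:ℝ) < (p : ℝ) - k := by
    have : (k:ℝ) ≤ (p:ℝ) - k := by
      have := hkp; push_cast [← Nat.cast_le (α := ℝ)] at this ⊢; linarith
    linarith
  -- rewrite the choose ratio as a descFactorial ratio
  have hR : ((p - k).choose k : ℝ) / (p.choose k : ℝ) =
      ((p - k).descFactorial k : ℝ) / (p.descFactorial k : ℝ) := by
    rw [Nat.descFactorial_eq_factorial_mul_choose, Nat.descFactorial_eq_factorial_mul_choose]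
    push_cast
    rw [mul_div_mul_left _ _ (by positivity : (k.factorial : ℝ) ≠ 0)]
  set R : ℝ := ((p - k).choose k : ℝ) / (p.choose k : ℝ) with hRdef
  have hD0 : (0:ℝ) < (p.descFactorial k : ℝ) := by
    have : p.descFactorial k ≠ 0 := by
      rw [Ne, Nat.descFactorial_eq_zero_iff_lt]; omega
    exact_mod_cast Nat.pos_of_ne_zero this
  have hD1 : (0:ℝ) < ((p - k).descFactorial k : ℝ) := by
    have : (p - k).descFactorial k ≠ 0 := by
      rw [Ne, Nat.descFactorial_eq_zero_iff_lt]; omega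
    exact_mod_cast Nat.pos_of_ne_zero this
  have castA : (((p - k).descFactorial k : ℝ)) * (p:ℝ) ^ k ≤
      ((p.descFactorial k : ℝ)) * ((p:ℝ) - k) ^ k := by
    have := dF_A hkp
    have h2 : (((p - k).descFactorial k * p ^ k : ℕ) : ℝ) ≤
        ((p.descFactorial k * (p - k) ^ k : ℕ) : ℝ) := by exact_mod_cast this
    push_cast [Nat.cast_sub hkle] at h2
    exact h2
  have castB : ((p.descFactorial k : ℝ)) * ((p:ℝ) - 2 * k) ^ k ≤
      (((p - k).descFactorial k : ℝ)) * ((p:ℝ) - k) ^ k := by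
    have := dF_B hkp
    have h2 : ((p.descFactorial k * (p - 2 * k) ^ k : ℕ) : ℝ) ≤
        (((p - k).descFactorial k * (p - k) ^ k : ℕ) : ℝ) := by exact_mod_cast this
    push_cast [Nat.cast_sub hkle, Nat.cast_sub hkp] at h2
    exact h2
  set t : ℝ := (k:ℝ) ^ 2 / p with htdef
  have ht0 : 0 < t := by positivity
  -- upper bound on R
  have hx0 : (0:ℝ) < (k:ℝ) / p := by positivity
  have hx1 : (k:ℝ) / p ≤ 1 := by rw [div_le_one hp0]; linarith
  have hRupper : R ≤ 1 / (1 + t) := by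
    have hstep1 : R ≤ (((p:ℝ) - k) / p) ^ k := by
      rw [hR, div_pow, div_le_div_iff₀ hD0 (by positivity)]
      linarith [castA]
    have heq : ((p:ℝ) - k) / p = 1 - (k:ℝ) / p := by field_simp
    have h2 : 1 - (k:ℝ) / p ≤ 1 / (1 + (k:ℝ) / p) := by
      rw [le_div_iff₀ (by linarith)]
      nlinarith [sq_nonneg ((k:ℝ)/p)]
    have h3 : (1 - (k:ℝ) / p) ^ k ≤ (1 / (1 + (k:ℝ) / p)) ^ k :=
      pow_le_pow_left₀ (by linarith) h2 k
    have h4 : (1 / (1 + (k:ℝ) / p)) ^ k = 1 / (1 + (k:ℝ) / p) ^ k := by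
      rw [div_pow, one_pow]
    have h5 : 1 + (k:ℝ) * ((k:ℝ) / p) ≤ (1 + (k:ℝ) / p) ^ k :=
      one_add_mul_le_pow (by linarith) k
    have h6 : (k:ℝ) * ((k:ℝ) / p) = t := by rw [htdef]; ring
    have h7 : 1 / (1 + (k:ℝ) / p) ^ k ≤ 1 / (1 + t) := by
      apply one_div_le_one_div_of_le (by linarith)
      linarith [h5, h6.symm ▸ h5]
    calc R ≤ (((p:ℝ) - k) / p) ^ k := hstep1
      _ = (1 - (k:ℝ) / p) ^ k := by rw [heq]
      _ ≤ (1 / (1 + (k:ℝ) / p)) ^ k := h3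
      _ = 1 / (1 + (k:ℝ) / p) ^ k := h4
      _ ≤ 1 / (1 + t) := h7
  -- lower bound on R
  have hy1 : (k:ℝ) / ((p:ℝ) - k) ≤ 1 := by
    rw [div_le_one hpk0]
    have : (2 * k : ℝ) ≤ p := by exact_mod_cast hkp
    linarith
  have hRlower : 1 - (k:ℝ) ^ 2 / ((p:ℝ) - k) ≤ R := by
    have hstep1 : (((p:ℝ) - 2 * k) / ((p:ℝ) - k)) ^ k ≤ R := by
      rw [hR, div_pow, div_le_div_iff₀ (by positivity) hD0]
      linarith [castB]
    have heq : ((p:ℝ) - 2 * k) / ((p:ℝ) - k) = 1 + (-((k:ℝ) / ((p:ℝ) - k))) := by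
      field_simp
      ring
    have hber : 1 + (k:ℝ) * (-((k:ℝ) / ((p:ℝ) - k))) ≤ (1 + (-((k:ℝ) / ((p:ℝ) - k)))) ^ k :=
      one_add_mul_le_pow (by linarith) k
    have h6 : (k:ℝ) * (-((k:ℝ) / ((p:ℝ) - k))) = -((k:ℝ) ^ 2 / ((p:ℝ) - k)) := by ring
    calc 1 - (k:ℝ) ^ 2 / ((p:ℝ) - k) = 1 + (k:ℝ) * (-((k:ℝ) / ((p:ℝ) - k))) := by
            rw [h6]; ring
      _ ≤ (1 + (-((k:ℝ) / ((p:ℝ) - k)))) ^ k := hber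
      _ = (((p:ℝ) - 2 * k) / ((p:ℝ) - k)) ^ k := by rw [heq]
      _ ≤ R := hstep1
  constructor
  · -- lower bound of the product
    have h1 : t / (1 + t) ≤ 1 - R := by
      rw [div_le_iff₀ (by linarith)]
      have : R * (1 + t) ≤ 1 := by
        have := mul_le_mul_of_nonneg_right hRupper (le_of_lt (by linarith : (0:ℝ) < 1 + t))
        rwa [div_mul_cancel₀ 1 (by linarith : (1:ℝ) + t ≠ 0)] at this
      nlinarith
    have h2 : (p:ℝ) / (k:ℝ) ^ 2 = 1 / t := by rw [htdef]; field_simp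
    rw [h2]
    have h3 : t / (1 + t) * (1 / t) ≤ (1 - R) * (1 / t) :=
      mul_le_mul_of_nonneg_right h1 (by positivity)
    calc 1 / (1 + t) = t / (1 + t) * (1 / t) := by field_simp
      _ ≤ (1 - R) * (1 / t) := h3
  · -- upper bound of the product
    have h1 : 1 - R ≤ (k:ℝ) ^ 2 / ((p:ℝ) - k) := by linarith
    have h3 : (1 - R) * ((p:ℝ) / (k:ℝ) ^ 2) ≤
        ((k:ℝ) ^ 2 / ((p:ℝ) - k)) * ((p:ℝ) / (k:ℝ) ^ 2) :=
      mul_le_mul_of_nonneg_right h1 (by positivity)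
    calc (1 - R) * ((p:ℝ) / (k:ℝ) ^ 2) ≤
        ((k:ℝ) ^ 2 / ((p:ℝ) - k)) * ((p:ℝ) / (k:ℝ) ^ 2) := h3
      _ = (p:ℝ) / ((p:ℝ) - k) := by field_simp

theorem beta_equiv_kn2pn (K P : ℕ → ℕ) (hK : ∀ n, 1 ≤ K n) (hKP : ∀ n, 2 * K n ≤ P n)
    (h0 : Tendsto (fun n => (K n : ℝ) ^ 2 / (P n : ℝ)) atTop (nhds 0)) :
    Tendsto (fun n =>
        (1 - ((P n - K n).choose (K n) : ℝ) / ((P n).choose (K n) : ℝ)) *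
          ((P n : ℝ) / (K n : ℝ) ^ 2))
      atTop (nhds 1) := by
  have hp0 : ∀ n, (0:ℝ) < P n := fun n => by
    exact_mod_cast Nat.lt_of_lt_of_le (by have := hK n; omega) (hKP n)
  have hpk0 : ∀ n, (0:ℝ) < (P n : ℝ) - (K n : ℝ) := fun n => by
    have h1 : (2 * K n : ℝ) ≤ P n := by exact_mod_cast hKP n
    have h2 : (1:ℝ) ≤ K n := by exact_mod_cast hK n
    linarith
  -- K n / P n → 0 by squeezing between 0 and (K n)^2 / P n
  have hkp0 : Tendsto (fun n => (K n : ℝ) / (P n : ℝ)) atTop (nhds 0) := by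
    apply tendsto_of_tendsto_of_tendsto_of_le_of_le (g := fun _ => (0:ℝ))
      tendsto_const_nhds h0
    · intro n; positivity
    · intro n
      have hk1 : (1:ℝ) ≤ K n := by exact_mod_cast hK n
      have hkk : (K n : ℝ) ≤ (K n : ℝ) ^ 2 := by nlinarith
      apply div_le_div_of_nonneg_right hkk (hp0 n).le
  -- the two squeezing limits
  have hlow : Tendsto (fun n => 1 / (1 + (K n : ℝ) ^ 2 / (P n : ℝ))) atTop (nhds 1) := by
    have h1 : Tendsto (fun n => 1 + (K n : ℝ) ^ 2 / (P n : ℝ)) atTop (nhds (1 + 0)) :=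
      tendsto_const_nhds.add h0
    have h2 := (tendsto_const_nhds (x := (1:ℝ))).div h1 (by norm_num)
    rw [show (1:ℝ) / (1 + 0) = 1 by norm_num] at h2
    exact h2.congr fun n => rfl
  have hup : Tendsto (fun n => (P n : ℝ) / ((P n : ℝ) - (K n : ℝ))) atTop (nhds 1) := by
    have h1 : Tendsto (fun n => 1 - (K n : ℝ) / (P n : ℝ)) atTop (nhds (1 - 0)) :=
      tendsto_const_nhds.sub hkp0
    have h2 := h1.inv₀ (by norm_num)
    have h3 : Tendsto (fun n => (1 - (K n : ℝ) / (P n : ℝ))⁻¹) atTop (nhds 1) := by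
      simpa using h2
    apply h3.congr
    intro n
    have hpn := hp0 n
    have hpkn := hpk0 n
    have heq : (1:ℝ) - (K n : ℝ) / (P n : ℝ) = ((P n : ℝ) - (K n : ℝ)) / (P n : ℝ) := by
      field_simp
    rw [heq, inv_div]
  exact tendsto_of_tendsto_of_tendsto_of_le_of_le hlow hup
    (fun n => (key_bounds (hK n) (hKP n)).1) (fun n => (key_bounds (hK n) (hKP n)).2)
end

section
/- Let (K_n) and (P_n) be sequences of positive integers with 3K_n ≤ P_n for all n and K_n²/P_n → 0 as n → ∞. Set β_n := 1 − C(P_n − K_n, K_n)/C(P_n, K_n) and β̃_n := 1 − C(P_n − 2K_n, K_n)/C(P_n, K_n). Then for every ε with 0 < ε < 1 there exists N such that for all n ≥ N, 1 − ε ≤ β̃_n/β_n − 1 ≤ 1 + ε; equivalently, β̃_n/β_n → 2 as n → ∞. -/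
open Filter Finset

-- ratio of binomials as product
lemma choose_ratio (P K c : ℕ) (hc : c + K ≤ P) :
    ((P - c).choose K : ℝ) / (P.choose K : ℝ) =
      ∏ i ∈ Finset.range K, (((P : ℝ) - c - i) / ((P : ℝ) - i)) := by
  have hnum : ((P - c).descFactorial K : ℝ) = ∏ i ∈ Finset.range K, ((P : ℝ) - c - i) := by
    rw [Nat.descFactorial_eq_prod_range]
    rw [Nat.cast_prod]
    apply Finset.prod_congr rfl
    intro i hi
    have hi' : i < K := Finset.mem_range.mp hi
    have h2 : i ≤ P - c := by omega
    rw [Nat.cast_sub h2, Nat.cast_sub (by omega : c ≤ P)]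
  have hden : ((P).descFactorial K : ℝ) = ∏ i ∈ Finset.range K, ((P : ℝ) - i) := by
    rw [Nat.descFactorial_eq_prod_range]
    rw [Nat.cast_prod]
    apply Finset.prod_congr rfl
    intro i hi
    have hi' : i < K := Finset.mem_range.mp hi
    rw [Nat.cast_sub (by omega : i ≤ P)]
  have e1 : ((P - c).descFactorial K : ℝ) = (K.factorial : ℝ) * ((P - c).choose K : ℝ) := by
    rw [Nat.descFactorial_eq_factorial_mul_choose]; push_cast; ring
  have e2 : ((P).descFactorial K : ℝ) = (K.factorial : ℝ) * ((P).choose K : ℝ) := by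
    rw [Nat.descFactorial_eq_factorial_mul_choose]; push_cast; ring
  rw [Finset.prod_div_distrib, ← hnum, ← hden, e1, e2,
    mul_div_mul_left _ _ (by positivity : (K.factorial : ℝ) ≠ 0)]

lemma aux_pow_le (x : ℝ) (K : ℕ) (hx : 0 ≤ x) (hx1 : x ≤ 1) :
    (1 - x) ^ K ≤ 1 - K * x + (K * x) ^ 2 := by
  set y : ℝ := K * x with hy'
  have hy : 0 ≤ y := by positivity
  rcases le_or_gt 1 y with h | h
  · have h1 : (1 - x) ^ K ≤ 1 := pow_le_one₀ (by linarith) (by linarith)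
    nlinarith
  · have h1 : (1 - x) ^ K * (1 + x) ^ K ≤ 1 := by
      rw [← mul_pow]
      apply pow_le_one₀ (by nlinarith) (by nlinarith)
    have h2 : (1 : ℝ) + y ≤ (1 + x) ^ K := by
      have := one_add_mul_le_pow (a := x) (by linarith) K
      rw [hy']; linarith
    have hpos : (0 : ℝ) < 1 + y := by linarith
    have hnn : 0 ≤ (1 - x) ^ K := pow_nonneg (by linarith) K
    have h3 : (1 - x) ^ K * (1 + y) ≤ 1 := le_trans (by nlinarith) h1
    nlinarith [h3, hpos, hnn]

lemma aux_le_pow (x : ℝ) (K : ℕ) (hx : x ≤ 2) : 1 - K * x ≤ (1 - x) ^ K := by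
  have := one_add_mul_le_pow (a := -x) (by linarith) K
  calc 1 - K * x = 1 + K * (-x) := by ring
  _ ≤ (1 + (-x)) ^ K := this
  _ = (1 - x) ^ K := by ring_nf

lemma prod_bounds (K P : ℕ) (hKP : K ≤ P) (c : ℝ) (hc : 0 ≤ c)
    (hcP : c ≤ (P : ℝ) - K + 1) :
    (1 - c / ((P : ℝ) - K + 1)) ^ K ≤ ∏ i ∈ Finset.range K, (((P : ℝ) - c - i) / ((P : ℝ) - i)) ∧
      ∏ i ∈ Finset.range K, (((P : ℝ) - c - i) / ((P : ℝ) - i)) ≤ (1 - c / (P : ℝ)) ^ K := by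
  have hd0 : (0 : ℝ) < (P : ℝ) - K + 1 := by
    have : (K : ℝ) ≤ P := Nat.cast_le.mpr hKP
    linarith
  have hfac : ∀ i ∈ Finset.range K, ((P : ℝ) - c - i) / ((P : ℝ) - i) = 1 - c / ((P : ℝ) - i) := by
    intro i hi
    have hi' : i < K := Finset.mem_range.mp hi
    have hpi : (0 : ℝ) < (P : ℝ) - i := by
      have : (i : ℝ) ≤ (K : ℝ) - 1 := by
        have : (i : ℝ) + 1 ≤ K := by exact_mod_cast hi'
        linarith
      linarith
    field_simp
    ring
  have hlow : ∀ i ∈ Finset.range K, 1 - c / ((P : ℝ) - K + 1) ≤ ((P : ℝ) - c - i) / ((P : ℝ) - i) := by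
    intro i hi
    rw [hfac i hi]
    have hi' : i < K := Finset.mem_range.mp hi
    have hiK : (i : ℝ) ≤ (K : ℝ) - 1 := by
      have : (i : ℝ) + 1 ≤ K := by exact_mod_cast hi'
      linarith
    have h1 : (P : ℝ) - K + 1 ≤ (P : ℝ) - i := by linarith
    have h2 : c / ((P : ℝ) - i) ≤ c / ((P : ℝ) - K + 1) :=
      div_le_div_of_nonneg_left hc hd0 h1
    linarith
  have hnn : ∀ i ∈ Finset.range K, (0 : ℝ) ≤ ((P : ℝ) - c - i) / ((P : ℝ) - i) := by
    intro i hi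
    have h1 := hlow i hi
    have h2 : 0 ≤ 1 - c / ((P : ℝ) - K + 1) := by
      rw [sub_nonneg, div_le_one hd0]; exact hcP
    linarith
  constructor
  · calc (1 - c / ((P : ℝ) - K + 1)) ^ K
        = ∏ _i ∈ Finset.range K, (1 - c / ((P : ℝ) - K + 1)) := by
          rw [Finset.prod_const, Finset.card_range]
    _ ≤ ∏ i ∈ Finset.range K, (((P : ℝ) - c - i) / ((P : ℝ) - i)) := by
        apply Finset.prod_le_prod
        · intro i hi
          rw [sub_nonneg, div_le_one hd0]; exact hcP
        · exact hlow
  · calc ∏ i ∈ Finset.range K, (((P : ℝ) - c - i) / ((P : ℝ) - i))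
        ≤ ∏ _i ∈ Finset.range K, (1 - c / (P : ℝ)) := by
          apply Finset.prod_le_prod hnn
          intro i hi
          rw [hfac i hi]
          have hi' : i < K := Finset.mem_range.mp hi
          have hiK : (i : ℝ) ≤ (K : ℝ) - 1 := by
            have : (i : ℝ) + 1 ≤ K := by exact_mod_cast hi'
            linarith
          have hpi : (0 : ℝ) < (P : ℝ) - i := by linarith
          have hP0 : (0 : ℝ) < P := by linarith
          gcongr
          linarith
    _ = (1 - c / (P : ℝ)) ^ K := by rw [Finset.prod_const, Finset.card_range]

set_option maxHeartbeats 1000000 in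
lemma main_bound (K P : ℕ) (hK : 1 ≤ K) (hKP : 3 * K ≤ P)
    (ht4 : (K : ℝ) ^ 2 / (P : ℝ) < 1 / 4) :
    2 * (1 - 2 * ((K : ℝ) ^ 2 / P)) * (1 - (K : ℝ) ^ 2 / P) ≤
      (1 - ((P - 2 * K).choose K : ℝ) / ((P).choose K : ℝ)) /
        (1 - ((P - K).choose K : ℝ) / ((P).choose K : ℝ)) ∧
    (1 - ((P - 2 * K).choose K : ℝ) / ((P).choose K : ℝ)) /
        (1 - ((P - K).choose K : ℝ) / ((P).choose K : ℝ)) ≤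
      2 / (1 - (K : ℝ) ^ 2 / P) ^ 2 := by
  have ha1 : (1 : ℝ) ≤ (K : ℝ) := by exact_mod_cast hK
  have hp3 : 3 * (K : ℝ) ≤ (P : ℝ) := by exact_mod_cast hKP
  have hp : (0 : ℝ) < P := by linarith
  set a : ℝ := (K : ℝ) with ha'
  set p : ℝ := (P : ℝ) with hp'
  set t : ℝ := a ^ 2 / p with ht'
  have htpos : 0 < t := by positivity
  have hat : a ^ 2 = t * p := by rw [ht', div_mul_cancel₀ _ hp.ne']
  set d : ℝ := p - a + 1 with hd'
  have hd0 : (0 : ℝ) < d := by simp only [hd']; linarith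
  have hdp : p * (1 - t) ≤ d := by nlinarith
  have hdle : d ≤ p := by simp only [hd']; linarith
  -- r bounds
  have hr := choose_ratio P K K (by omega)
  have hs := choose_ratio P K (2 * K) (by omega)
  set r : ℝ := ((P - K).choose K : ℝ) / ((P).choose K : ℝ) with hr'
  set s : ℝ := ((P - 2 * K).choose K : ℝ) / ((P).choose K : ℝ) with hs'
  have hKP' : K ≤ P := by omega
  have hbr := prod_bounds K P hKP' a (by linarith) (by simp only [hd'] at hd0 ⊢; linarith)
  have hbs := prod_bounds K P hKP' (2 * a) (by linarith) (by linarith)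
  rw [← hr] at hbr
  have h2a : ((2 * K : ℕ) : ℝ) = 2 * a := by push_cast; ring
  rw [h2a] at hs
  rw [← hs] at hbs
  -- upper bounds on r, s via aux_pow_le
  have hxr : 0 ≤ a / p := by positivity
  have hxr1 : a / p ≤ 1 := by rw [div_le_one hp]; linarith
  have hKa : (K : ℝ) = a := rfl
  have hrup : r ≤ 1 - t + t ^ 2 := by
    refine le_trans hbr.2 ?_
    have := aux_pow_le (a / p) K hxr hxr1
    have e : (K : ℝ) * (a / p) = t := by rw [hKa, ht']; field_simp
    rw [e] at this
    exact this
  have hxs : 0 ≤ 2 * a / p := by positivity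
  have hxs1 : 2 * a / p ≤ 1 := by rw [div_le_one hp]; linarith
  have hsup : s ≤ 1 - 2 * t + (2 * t) ^ 2 := by
    refine le_trans hbs.2 ?_
    have := aux_pow_le (2 * a / p) K hxs hxs1
    have e : (K : ℝ) * (2 * a / p) = 2 * t := by rw [hKa, ht']; field_simp
    rw [e] at this
    exact this
  -- lower bounds on r, s via aux_le_pow
  have hrlow : 1 - a ^ 2 / d ≤ r := by
    refine le_trans ?_ hbr.1
    have := aux_le_pow (a / d) K (by rw [div_le_iff₀ hd0]; linarith)
    have e : (K : ℝ) * (a / d) = a ^ 2 / d := by rw [hKa]; field_simp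
    rw [e] at this
    have e2 : (1 : ℝ) - a / (p - (K:ℝ) + 1) = 1 - a / d := by rw [hKa, hd']
    rw [e2]
    exact this
  have hslow : 1 - 2 * a ^ 2 / d ≤ s := by
    refine le_trans ?_ hbs.1
    have := aux_le_pow (2 * a / d) K (by rw [div_le_iff₀ hd0]; linarith)
    have e : (K : ℝ) * (2 * a / d) = 2 * a ^ 2 / d := by rw [hKa]; field_simp
    rw [e] at this
    have e2 : (1 : ℝ) - 2 * a / (p - (K:ℝ) + 1) = 1 - 2 * a / d := by rw [hKa, hd']
    rw [e2]
    exact this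
  set A : ℝ := 1 - s with hA'
  set B : ℝ := 1 - r with hB'
  have hBlow : t - t ^ 2 ≤ B := by simp only [hB']; linarith
  have hAlow : 2 * t - 4 * t ^ 2 ≤ A := by simp only [hA']; nlinarith
  have hBd : B * d ≤ t * p := by
    have : B ≤ a ^ 2 / d := by simp only [hB']; linarith
    calc B * d ≤ (a ^ 2 / d) * d := by nlinarith
    _ = a ^ 2 := by field_simp
    _ = t * p := hat
  have hAd : A * d ≤ 2 * (t * p) := by
    have : A ≤ 2 * a ^ 2 / d := by simp only [hA']; linarith
    calc A * d ≤ (2 * a ^ 2 / d) * d := by nlinarith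
    _ = 2 * a ^ 2 := by field_simp
    _ = 2 * (t * p) := by rw [hat]
  have ht1 : t < 1 := by linarith
  clear hr hs hbr hbs hrup hsup hrlow hslow
  have hBpos : 0 < B := by nlinarith [hBlow, htpos, ht1]
  constructor
  · rw [le_div_iff₀ hBpos]
    have c1 : (0 : ℝ) ≤ 2 * (1 - 2 * t) * (1 - t) := by nlinarith
    have step1 : 2 * (1 - 2 * t) * (1 - t) * (B * d) ≤ 2 * (1 - 2 * t) * (1 - t) * (t * p) :=
      mul_le_mul_of_nonneg_left hBd c1
    have c2 : (0 : ℝ) ≤ 2 * t * (1 - 2 * t) := by nlinarith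
    have step2 : 2 * (1 - 2 * t) * (1 - t) * (t * p) ≤ 2 * t * (1 - 2 * t) * d := by
      linarith [mul_le_mul_of_nonneg_left hdp c2]
    have step3 : (2 * t - 4 * t ^ 2) * d ≤ A * d := mul_le_mul_of_nonneg_right hAlow hd0.le
    have final : 2 * (1 - 2 * t) * (1 - t) * B * d ≤ A * d := by linarith
    exact le_of_mul_le_mul_right final hd0
  · rw [div_le_div_iff₀ hBpos (pow_pos (by linarith : (0:ℝ) < 1 - t) 2)]
    -- goal: A * (1 - t)^2 ≤ 2 * B  (order?)
    have step1 : A * (1 - t) ^ 2 * d ≤ 2 * (t * p) * (1 - t) ^ 2 := by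
      linarith [mul_le_mul_of_nonneg_right hAd (sq_nonneg (1 - t))]
    have step2 : 2 * (t * p) * (1 - t) ^ 2 ≤ 2 * t * (1 - t) * d := by
      have hc : (0:ℝ) ≤ 2 * t * (1 - t) := mul_nonneg (by positivity) (by linarith)
      linarith [mul_le_mul_of_nonneg_left hdp hc]
    have step3 : 2 * (t - t ^ 2) * d ≤ 2 * B * d := by
      linarith [mul_le_mul_of_nonneg_right hBlow hd0.le]
    have final : A * (1 - t) ^ 2 * d ≤ 2 * B * d := by linarith
    have := le_of_mul_le_mul_right final hd0
    linarith [this]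

theorem beta_tilde_over_beta (K P : ℕ → ℕ) (hK : ∀ n, 1 ≤ K n) (hKP : ∀ n, 3 * K n ≤ P n)
    (h0 : Tendsto (fun n => (K n : ℝ) ^ 2 / (P n : ℝ)) atTop (nhds 0)) :
    (∀ ε : ℝ, 0 < ε → ε < 1 → ∃ N : ℕ, ∀ n ≥ N,
        1 - ε ≤ (1 - ((P n - 2 * K n).choose (K n) : ℝ) / ((P n).choose (K n) : ℝ)) /
            (1 - ((P n - K n).choose (K n) : ℝ) / ((P n).choose (K n) : ℝ)) - 1 ∧
        (1 - ((P n - 2 * K n).choose (K n) : ℝ) / ((P n).choose (K n) : ℝ)) /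
            (1 - ((P n - K n).choose (K n) : ℝ) / ((P n).choose (K n) : ℝ)) - 1 ≤ 1 + ε) ∧
    Tendsto (fun n =>
        (1 - ((P n - 2 * K n).choose (K n) : ℝ) / ((P n).choose (K n) : ℝ)) /
          (1 - ((P n - K n).choose (K n) : ℝ) / ((P n).choose (K n) : ℝ)))
      atTop (nhds 2) := by
  have hsmall : ∀ᶠ n in atTop, (K n : ℝ) ^ 2 / (P n : ℝ) < 1 / 4 :=
    h0.eventually (gt_mem_nhds (by norm_num))
  have hbounds : ∀ᶠ n in atTop,
      2 * (1 - 2 * ((K n : ℝ) ^ 2 / (P n : ℝ))) * (1 - (K n : ℝ) ^ 2 / (P n : ℝ)) ≤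
        (1 - ((P n - 2 * K n).choose (K n) : ℝ) / ((P n).choose (K n) : ℝ)) /
          (1 - ((P n - K n).choose (K n) : ℝ) / ((P n).choose (K n) : ℝ)) ∧
      (1 - ((P n - 2 * K n).choose (K n) : ℝ) / ((P n).choose (K n) : ℝ)) /
          (1 - ((P n - K n).choose (K n) : ℝ) / ((P n).choose (K n) : ℝ)) ≤
        2 / (1 - (K n : ℝ) ^ 2 / (P n : ℝ)) ^ 2 := by
    filter_upwards [hsmall] with n hn
    exact main_bound (K n) (P n) (hK n) (hKP n) hn
  have hL : Tendsto (fun n => 2 * (1 - 2 * ((K n : ℝ) ^ 2 / (P n : ℝ))) *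
      (1 - (K n : ℝ) ^ 2 / (P n : ℝ))) atTop (nhds 2) := by
    have cg : Continuous fun x : ℝ => 2 * (1 - 2 * x) * (1 - x) := by continuity
    have := (cg.tendsto 0).comp h0
    simpa [Function.comp_def] using this
  have hU : Tendsto (fun n => 2 / (1 - (K n : ℝ) ^ 2 / (P n : ℝ)) ^ 2) atTop (nhds 2) := by
    have h1 : Tendsto (fun n => (1 - (K n : ℝ) ^ 2 / (P n : ℝ)) ^ 2) atTop (nhds 1) := by
      have := (tendsto_const_nhds (x := (1:ℝ)) (f := atTop)).sub h0
      simpa using this.pow 2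
    have := (tendsto_const_nhds (x := (2:ℝ)) (f := atTop)).div h1 (by norm_num)
    rw [div_one] at this; exact this
  have key : Tendsto (fun n =>
      (1 - ((P n - 2 * K n).choose (K n) : ℝ) / ((P n).choose (K n) : ℝ)) /
        (1 - ((P n - K n).choose (K n) : ℝ) / ((P n).choose (K n) : ℝ)))
      atTop (nhds 2) :=
    tendsto_of_tendsto_of_tendsto_of_le_of_le' hL hU
      (hbounds.mono fun n h => h.1) (hbounds.mono fun n h => h.2)
  refine ⟨?_, key⟩
  intro ε hε hε1
  obtain ⟨N, hN⟩ := Metric.tendsto_atTop.mp key ε hε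
  refine ⟨N, fun n hn => ?_⟩
  have h := hN n hn
  rw [Real.dist_eq] at h
  have h' := abs_lt.mp h
  exact ⟨by linarith [h'.1], by linarith [h'.2]⟩
end

section
/- For all natural numbers P and K with 1 ≤ K and 2K ≤ P, the following chains of inequalities hold in the real numbers: (1 − K/(P − K + 1))^K ≤ C(P − K, K)/C(P, K) ≤ (1 − K/P)^K, and consequently exp(−K²/(P − 2K + 1)) ≤ C(P − K, K)/C(P, K) ≤ exp(−K²/P). -/
open Finset

theorem choose_ratio_bounds (P K : ℕ) (hK : 1 ≤ K) (h : 2 * K ≤ P) :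
    ((1 - (K : ℝ) / ((P : ℝ) - (K : ℝ) + 1)) ^ K ≤ ((P - K).choose K : ℝ) / (P.choose K : ℝ) ∧
      ((P - K).choose K : ℝ) / (P.choose K : ℝ) ≤ (1 - (K : ℝ) / (P : ℝ)) ^ K) ∧
    (Real.exp (-(K : ℝ) ^ 2 / ((P : ℝ) - 2 * (K : ℝ) + 1)) ≤
        ((P - K).choose K : ℝ) / (P.choose K : ℝ) ∧
      ((P - K).choose K : ℝ) / (P.choose K : ℝ) ≤ Real.exp (-(K : ℝ) ^ 2 / (P : ℝ))) := by
  have hk1 : (1:ℝ) ≤ (K:ℝ) := by exact_mod_cast hK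
  have h2kp : 2*(K:ℝ) ≤ (P:ℝ) := by exact_mod_cast h
  have hp0 : (0:ℝ) < P := by linarith
  -- product formula
  have hratio : ((P - K).choose K : ℝ) / (P.choose K : ℝ) =
      ∏ i ∈ range K, (((P:ℝ) - K - i) / ((P:ℝ) - i)) := by
    have h1 : ((P-K).choose K : ℝ) = ((P-K).descFactorial K : ℝ) / (K.factorial : ℝ) := by
      rw [Nat.descFactorial_eq_factorial_mul_choose]
      field_simp
      push_cast; ring
    have h2 : (P.choose K : ℝ) = (P.descFactorial K : ℝ) / (K.factorial : ℝ) := by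
      rw [Nat.descFactorial_eq_factorial_mul_choose]
      field_simp
      push_cast; ring
    rw [h1, h2, div_div_div_cancel_right₀ (by exact_mod_cast K.factorial_ne_zero)]
    rw [Nat.descFactorial_eq_prod_range, Nat.descFactorial_eq_prod_range]
    push_cast
    rw [← Finset.prod_div_distrib]
    apply Finset.prod_congr rfl
    intro i hi
    simp only [mem_range] at hi
    have h1 : (i:ℝ) ≤ (K:ℝ) - 1 := by
      have : (i:ℝ) + 1 ≤ (K:ℝ) := by exact_mod_cast hi
      linarith
    have hc1 : ((P - K - i : ℕ) : ℝ) = (P:ℝ) - K - i := by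
      have : K + i ≤ P := by omega
      have hKi : i ≤ P - K := by omega
      rw [Nat.cast_sub hKi, Nat.cast_sub (by omega : K ≤ P)]
    have hc2 : ((P - i : ℕ) : ℝ) = (P:ℝ) - i := by
      rw [Nat.cast_sub (by omega : i ≤ P)]
    rw [hc1, hc2]
  have hfact : ∀ i ∈ range K,
      (1 - (K:ℝ)/((P:ℝ) - K + 1)) ≤ ((P:ℝ) - K - i)/((P:ℝ) - i) ∧
      ((P:ℝ) - K - i)/((P:ℝ) - i) ≤ (1 - (K:ℝ)/(P:ℝ)) := by
    intro i hi
    simp only [mem_range] at hi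
    have hiK : (i:ℝ) ≤ (K:ℝ) - 1 := by
      have : (i:ℝ) + 1 ≤ (K:ℝ) := by exact_mod_cast hi
      linarith
    have hpi : (0:ℝ) < (P:ℝ) - i := by linarith
    have hpk1 : (0:ℝ) < (P:ℝ) - K + 1 := by linarith
    have heq : ((P:ℝ) - K - i)/((P:ℝ) - i) = 1 - (K:ℝ)/((P:ℝ) - i) := by
      field_simp
      ring
    rw [heq]
    constructor
    · have : (K:ℝ)/((P:ℝ) - i) ≤ (K:ℝ)/((P:ℝ) - K + 1) :=
        div_le_div_of_nonneg_left (by linarith) hpk1 (by linarith)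
      linarith
    · have : (K:ℝ)/(P:ℝ) ≤ (K:ℝ)/((P:ℝ) - i) :=
        div_le_div_of_nonneg_left (by linarith) hpi (by linarith)
      linarith
  have hL0 : (0:ℝ) ≤ 1 - (K:ℝ)/((P:ℝ) - K + 1) := by
    have : (K:ℝ)/((P:ℝ) - K + 1) ≤ 1 := by
      rw [div_le_one (by linarith)]
      linarith
    linarith
  have hlow : (1 - (K:ℝ)/((P:ℝ) - K + 1)) ^ K ≤ ((P - K).choose K : ℝ) / (P.choose K : ℝ) := by
    rw [hratio]
    calc (1 - (K:ℝ)/((P:ℝ) - K + 1)) ^ K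
        = ∏ _i ∈ range K, (1 - (K:ℝ)/((P:ℝ) - K + 1)) := by
          rw [Finset.prod_const, Finset.card_range]
      _ ≤ _ := Finset.prod_le_prod (fun i _ => hL0) (fun i hi => (hfact i hi).1)
  have hhigh : ((P - K).choose K : ℝ) / (P.choose K : ℝ) ≤ (1 - (K:ℝ)/(P:ℝ)) ^ K := by
    rw [hratio]
    calc (∏ i ∈ range K, (((P:ℝ) - K - i) / ((P:ℝ) - i)))
        ≤ ∏ _i ∈ range K, (1 - (K:ℝ)/(P:ℝ)) :=
          Finset.prod_le_prod (fun i hi => le_trans hL0 (hfact i hi).1)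
            (fun i hi => (hfact i hi).2)
      _ = (1 - (K:ℝ)/(P:ℝ)) ^ K := by rw [Finset.prod_const, Finset.card_range]
  refine ⟨⟨hlow, hhigh⟩, ?_, ?_⟩
  · -- exp lower bound
    have hd : (0:ℝ) < (P:ℝ) - 2*K + 1 := by linarith
    have hpk1 : (0:ℝ) < (P:ℝ) - K + 1 := by linarith
    have key : Real.exp (-(K:ℝ)/((P:ℝ) - 2*K + 1)) ≤ 1 - (K:ℝ)/((P:ℝ) - K + 1) := by
      have ht0 : (0:ℝ) ≤ (K:ℝ)/((P:ℝ) - 2*K + 1) := by positivity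
      have h1 : 1 + (K:ℝ)/((P:ℝ) - 2*K + 1) ≤ Real.exp ((K:ℝ)/((P:ℝ) - 2*K + 1)) := by
        have := Real.add_one_le_exp ((K:ℝ)/((P:ℝ) - 2*K + 1))
        linarith
      have h2 : Real.exp (-(K:ℝ)/((P:ℝ) - 2*K + 1)) ≤ (1 + (K:ℝ)/((P:ℝ) - 2*K + 1))⁻¹ := by
        rw [neg_div, Real.exp_neg]
        exact inv_anti₀ (by linarith) h1
      have hne : (1:ℝ) + (K:ℝ)/((P:ℝ) - 2*K + 1) ≠ 0 := by positivity
      have h3 : (1 + (K:ℝ)/((P:ℝ) - 2*K + 1))⁻¹ = 1 - (K:ℝ)/((P:ℝ) - K + 1) := by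
        rw [inv_eq_one_div, div_eq_iff hne]
        rw [one_sub_div hpk1.ne', one_add_div hd.ne', div_mul_div_comm, eq_div_iff (mul_pos hpk1 hd).ne']
        ring
      linarith [h2, h3 ▸ h2]
    calc Real.exp (-(K:ℝ)^2/((P:ℝ) - 2*K + 1))
        = Real.exp (-(K:ℝ)/((P:ℝ) - 2*K + 1)) ^ K := by
          rw [← Real.exp_nat_mul]
          congr 1
          ring
      _ ≤ (1 - (K:ℝ)/((P:ℝ) - K + 1)) ^ K :=
          pow_le_pow_left₀ (Real.exp_nonneg _) key K
      _ ≤ _ := hlow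
  · have key : 1 - (K:ℝ)/(P:ℝ) ≤ Real.exp (-(K:ℝ)/(P:ℝ)) := by
      have := Real.add_one_le_exp (-(K:ℝ)/(P:ℝ))
      rw [neg_div] at this ⊢
      linarith
    have hU0 : (0:ℝ) ≤ 1 - (K:ℝ)/(P:ℝ) := by
      rw [sub_nonneg, div_le_one hp0]; linarith
    calc ((P - K).choose K : ℝ) / (P.choose K : ℝ) ≤ (1 - (K:ℝ)/(P:ℝ)) ^ K := hhigh
      _ ≤ Real.exp (-(K:ℝ)/(P:ℝ)) ^ K := pow_le_pow_left₀ hU0 key K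
      _ = Real.exp (-(K:ℝ)^2/(P:ℝ)) := by
          rw [← Real.exp_nat_mul]
          congr 1
          ring
end

section
/- For all natural numbers P and K with 1 ≤ K and 3K ≤ P, the following chains of inequalities hold in the real numbers: (1 − K/(P − 2K + 1))^K ≤ C(P − 2K, K)/C(P − K, K) ≤ (1 − K/(P − K))^K, and consequently exp(−K²/(P − 3K + 1)) ≤ C(P − 2K, K)/C(P − K, K) ≤ exp(−K²/(P − K)). -/
open Finset

lemma ratio_eq (n K : ℕ) (hKn : 2 * K ≤ n) :
    ((n - K).choose K : ℝ) / (n.choose K : ℝ) =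
      ∏ i ∈ range K, (((n : ℝ) - K - i) / ((n : ℝ) - i)) := by
  have hKle : K ≤ n - K := by omega
  have hKn' : K ≤ n := by omega
  have hfac : (K.factorial : ℝ) ≠ 0 := by positivity
  have h1 : ((n - K).descFactorial K : ℝ) = K.factorial * ((n - K).choose K : ℝ) := by
    exact_mod_cast congrArg (Nat.cast : ℕ → ℝ)
      (Nat.descFactorial_eq_factorial_mul_choose (n - K) K)
  have h2 : (n.descFactorial K : ℝ) = K.factorial * (n.choose K : ℝ) := by
    exact_mod_cast congrArg (Nat.cast : ℕ → ℝ)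
      (Nat.descFactorial_eq_factorial_mul_choose n K)
  have key : ((n - K).choose K : ℝ) / (n.choose K : ℝ) =
      ((n - K).descFactorial K : ℝ) / (n.descFactorial K : ℝ) := by
    rw [h1, h2, mul_div_mul_left _ _ hfac]
  rw [key, Nat.descFactorial_eq_prod_range, Nat.descFactorial_eq_prod_range]
  push_cast
  rw [← Finset.prod_div_distrib]
  refine Finset.prod_congr rfl fun i hi => ?_
  have hi' : i < K := Finset.mem_range.mp hi
  push_cast [Nat.cast_sub (by omega : i ≤ n - K), Nat.cast_sub hKn',
    Nat.cast_sub (show i ≤ n by omega)]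
  ring

theorem choose_ratio_bounds2 (P K : ℕ) (hK : 1 ≤ K) (h : 3 * K ≤ P) :
    ((1 - (K : ℝ) / ((P : ℝ) - 2 * (K : ℝ) + 1)) ^ K ≤
        ((P - 2 * K).choose K : ℝ) / ((P - K).choose K : ℝ) ∧
      ((P - 2 * K).choose K : ℝ) / ((P - K).choose K : ℝ) ≤
        (1 - (K : ℝ) / ((P : ℝ) - (K : ℝ))) ^ K) ∧
    (Real.exp (-(K : ℝ) ^ 2 / ((P : ℝ) - 3 * (K : ℝ) + 1)) ≤
        ((P - 2 * K).choose K : ℝ) / ((P - K).choose K : ℝ) ∧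
      ((P - 2 * K).choose K : ℝ) / ((P - K).choose K : ℝ) ≤
        Real.exp (-(K : ℝ) ^ 2 / ((P : ℝ) - (K : ℝ)))) := by
  have hK1 : (1 : ℝ) ≤ (K : ℝ) := by exact_mod_cast hK
  have hP3K : (3 : ℝ) * K ≤ (P : ℝ) := by exact_mod_cast h
  have hnpos : (0 : ℝ) < (P : ℝ) - K := by linarith
  have hd1pos : (0 : ℝ) < (P : ℝ) - 2 * K + 1 := by linarith
  have hd2pos : (0 : ℝ) < (P : ℝ) - 3 * K + 1 := by linarith
  have hlo_nonneg : (0 : ℝ) ≤ 1 - (K : ℝ) / ((P : ℝ) - 2 * K + 1) := by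
    rw [sub_nonneg, div_le_one hd1pos]; linarith
  have hup_nonneg : (0 : ℝ) ≤ 1 - (K : ℝ) / ((P : ℝ) - K) := by
    rw [sub_nonneg, div_le_one hnpos]; linarith
  have hm : P - 2 * K = (P - K) - K := by omega
  have hncast : ((P - K : ℕ) : ℝ) = (P : ℝ) - K := by
    push_cast [Nat.cast_sub (by omega : K ≤ P)]; ring
  have hreq := ratio_eq (P - K) K (by omega)
  rw [hncast] at hreq
  rw [hm, hreq]
  -- pointwise bounds on the factors
  have hterm : ∀ i ∈ range K,
      (1 - (K : ℝ) / ((P : ℝ) - 2 * K + 1)) ≤ ((P : ℝ) - K - K - i) / ((P : ℝ) - K - i) ∧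
      ((P : ℝ) - K - K - i) / ((P : ℝ) - K - i) ≤ 1 - (K : ℝ) / ((P : ℝ) - K) := by
    intro i hi
    have hi' : (i : ℝ) ≤ (K : ℝ) - 1 := by
      have := Finset.mem_range.mp hi
      have : (i : ℝ) + 1 ≤ K := by exact_mod_cast this
      linarith
    have hy : (0 : ℝ) < (P : ℝ) - K - i := by linarith
    have heq : ((P : ℝ) - K - K - i) / ((P : ℝ) - K - i)
        = 1 - (K : ℝ) / ((P : ℝ) - K - i) := by
      field_simp; ring
    constructor
    · rw [heq]
      have : (K : ℝ) / ((P : ℝ) - K - i) ≤ (K : ℝ) / ((P : ℝ) - 2 * K + 1) :=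
        div_le_div_of_nonneg_left (by linarith) hd1pos (by linarith)
      linarith
    · rw [heq]
      have : (K : ℝ) / ((P : ℝ) - K) ≤ (K : ℝ) / ((P : ℝ) - K - i) :=
        div_le_div_of_nonneg_left (by linarith) hy (by linarith)
      linarith
  have hlower : (1 - (K : ℝ) / ((P : ℝ) - 2 * K + 1)) ^ K ≤
      ∏ i ∈ range K, (((P : ℝ) - K - K - i) / ((P : ℝ) - K - i)) := by
    have : (1 - (K : ℝ) / ((P : ℝ) - 2 * K + 1)) ^ K
        = ∏ _i ∈ range K, (1 - (K : ℝ) / ((P : ℝ) - 2 * K + 1)) := by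
      rw [Finset.prod_const, Finset.card_range]
    rw [this]
    exact Finset.prod_le_prod (fun i _ => hlo_nonneg) (fun i hi => (hterm i hi).1)
  have hupper : (∏ i ∈ range K, (((P : ℝ) - K - K - i) / ((P : ℝ) - K - i))) ≤
      (1 - (K : ℝ) / ((P : ℝ) - K)) ^ K := by
    have : (1 - (K : ℝ) / ((P : ℝ) - K)) ^ K
        = ∏ _i ∈ range K, (1 - (K : ℝ) / ((P : ℝ) - K)) := by
      rw [Finset.prod_const, Finset.card_range]
    rw [this]
    refine Finset.prod_le_prod (fun i hi => ?_) (fun i hi => (hterm i hi).2)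
    have h1 := (hterm i hi).1
    linarith
  refine ⟨⟨hlower, hupper⟩, ?_, ?_⟩
  · -- exp lower bound
    have hstep : Real.exp (-((K : ℝ) / ((P : ℝ) - 3 * K + 1))) ≤
        1 - (K : ℝ) / ((P : ℝ) - 2 * K + 1) := by
      have h1 : (1 : ℝ) + (K : ℝ) / ((P : ℝ) - 3 * K + 1) ≤
          Real.exp ((K : ℝ) / ((P : ℝ) - 3 * K + 1)) := by
        have := Real.add_one_le_exp ((K : ℝ) / ((P : ℝ) - 3 * K + 1))
        linarith
      have hratio : (1 : ℝ) + (K : ℝ) / ((P : ℝ) - 3 * K + 1) =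
          ((P : ℝ) - 2 * K + 1) / ((P : ℝ) - 3 * K + 1) := by
        rw [one_add_div hd2pos.ne']; ring
      have hbpos : (0 : ℝ) < ((P : ℝ) - 2 * K + 1) / ((P : ℝ) - 3 * K + 1) :=
        div_pos hd1pos hd2pos
      have hinv : (Real.exp ((K : ℝ) / ((P : ℝ) - 3 * K + 1)))⁻¹ ≤
          (((P : ℝ) - 2 * K + 1) / ((P : ℝ) - 3 * K + 1))⁻¹ := by
        apply inv_anti₀ hbpos
        rw [← hratio]; exact h1
      rw [Real.exp_neg]
      calc (Real.exp ((K : ℝ) / ((P : ℝ) - 3 * K + 1)))⁻¹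
          ≤ (((P : ℝ) - 2 * K + 1) / ((P : ℝ) - 3 * K + 1))⁻¹ := hinv
        _ = ((P : ℝ) - 3 * K + 1) / ((P : ℝ) - 2 * K + 1) := by
            rw [inv_div]
        _ = 1 - (K : ℝ) / ((P : ℝ) - 2 * K + 1) := by
            rw [one_sub_div hd1pos.ne']; ring
    calc Real.exp (-(K : ℝ) ^ 2 / ((P : ℝ) - 3 * K + 1))
        = Real.exp (-((K : ℝ) / ((P : ℝ) - 3 * K + 1))) ^ K := by
          rw [← Real.exp_nat_mul]; congr 1; ring
      _ ≤ (1 - (K : ℝ) / ((P : ℝ) - 2 * K + 1)) ^ K :=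
          pow_le_pow_left₀ (Real.exp_nonneg _) hstep K
      _ ≤ _ := hlower
  · -- exp upper bound
    have hstep : 1 - (K : ℝ) / ((P : ℝ) - K) ≤ Real.exp (-((K : ℝ) / ((P : ℝ) - K))) := by
      have := Real.add_one_le_exp (-((K : ℝ) / ((P : ℝ) - K)))
      linarith
    calc (∏ i ∈ range K, (((P : ℝ) - K - K - i) / ((P : ℝ) - K - i)))
        ≤ (1 - (K : ℝ) / ((P : ℝ) - K)) ^ K := hupper
      _ ≤ Real.exp (-((K : ℝ) / ((P : ℝ) - K))) ^ K :=
          pow_le_pow_left₀ hup_nonneg hstep K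
      _ = Real.exp (-(K : ℝ) ^ 2 / ((P : ℝ) - K)) := by
          rw [← Real.exp_nat_mul]; congr 1; ring
end

section
/- Let n be a positive integer and c > 0 a real number with log n + c < n. Then n · (1 − (log n + c)/n)^{n−1} ≥ exp(−c) · exp(−(log n + c)²/(n − (log n + c))). -/
theorem isolated_lower_bound (n : ℕ) (hn : 0 < n) (c : ℝ) (hc : 0 < c)
    (h : Real.log n + c < n) :
    Real.exp (-c) * Real.exp (-(Real.log n + c) ^ 2 / ((n : ℝ) - (Real.log n + c))) ≤
      (n : ℝ) * (1 - (Real.log n + c) / (n : ℝ)) ^ (n - 1) := by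
  set L : ℝ := Real.log n + c with hLdef
  have hn' : (0:ℝ) < n := by exact_mod_cast hn
  have hlog : 0 ≤ Real.log n := Real.log_nonneg (by exact_mod_cast hn)
  have hL : 0 < L := by positivity
  have hnL : 0 < (n:ℝ) - L := by linarith
  have ht : L / ((n:ℝ) - L) + 1 ≤ Real.exp (L / ((n:ℝ) - L)) := Real.add_one_le_exp _
  have hfrac : L / ((n:ℝ) - L) + 1 = (n:ℝ) / ((n:ℝ) - L) := by field_simp; ring
  have hexp_pos : 0 < Real.exp (L / ((n:ℝ) - L)) := Real.exp_pos _
  have key : Real.exp (-(L / ((n:ℝ) - L))) ≤ 1 - L / (n:ℝ) := by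
    rw [Real.exp_neg]
    have h1 : (n:ℝ) / ((n:ℝ) - L) ≤ Real.exp (L / ((n:ℝ) - L)) := hfrac ▸ ht
    have h2 : (Real.exp (L / ((n:ℝ) - L)))⁻¹ ≤ (((n:ℝ) / ((n:ℝ) - L)))⁻¹ :=
      inv_anti₀ (by positivity) h1
    calc (Real.exp (L / ((n:ℝ) - L)))⁻¹ ≤ ((n:ℝ) / ((n:ℝ) - L))⁻¹ := h2
      _ = ((n:ℝ) - L) / (n:ℝ) := by rw [inv_div]
      _ = 1 - L / (n:ℝ) := by field_simp
  have hpow : Real.exp (-(L / ((n:ℝ) - L))) ^ (n - 1) ≤ (1 - L / (n:ℝ)) ^ (n - 1) :=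
    pow_le_pow_left₀ (Real.exp_nonneg _) key _
  have hcast : ((n - 1 : ℕ) : ℝ) = (n:ℝ) - 1 := by
    have := Nat.cast_pred hn (R := ℝ); simpa using this
  have hpow_eq : Real.exp (-(L / ((n:ℝ) - L))) ^ (n - 1)
      = Real.exp (((n:ℝ) - 1) * (-(L / ((n:ℝ) - L)))) := by
    rw [← Real.exp_nat_mul, hcast]
  have hlhs : Real.exp (-c) * Real.exp (-L ^ 2 / ((n:ℝ) - L))
      = Real.exp (-c + -L ^ 2 / ((n:ℝ) - L)) := (Real.exp_add _ _).symm
  have hrhs : (n:ℝ) * Real.exp (((n:ℝ) - 1) * (-(L / ((n:ℝ) - L))))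
      = Real.exp (Real.log n + ((n:ℝ) - 1) * (-(L / ((n:ℝ) - L)))) := by
    rw [Real.exp_add, Real.exp_log hn']
  have harg : -c + -L ^ 2 / ((n:ℝ) - L)
      ≤ Real.log n + ((n:ℝ) - 1) * (-(L / ((n:ℝ) - L))) := by
    have hlogn : Real.log n = L - c := by rw [hLdef]; ring
    rw [hlogn]
    have diff : (L - c + ((n:ℝ) - 1) * (-(L / ((n:ℝ) - L)))) - (-c + -L ^ 2 / ((n:ℝ) - L))
        = L / ((n:ℝ) - L) := by
      field_simp
      ring
    have hpos : 0 < L / ((n:ℝ) - L) := by positivity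
    linarith
  calc Real.exp (-c) * Real.exp (-L ^ 2 / ((n:ℝ) - L))
      = Real.exp (-c + -L ^ 2 / ((n:ℝ) - L)) := hlhs
    _ ≤ Real.exp (Real.log n + ((n:ℝ) - 1) * (-(L / ((n:ℝ) - L)))) := Real.exp_le_exp.mpr harg
    _ = (n:ℝ) * Real.exp (((n:ℝ) - 1) * (-(L / ((n:ℝ) - L)))) := hrhs.symm
    _ = (n:ℝ) * Real.exp (-(L / ((n:ℝ) - L))) ^ (n - 1) := by rw [hpow_eq]
    _ ≤ (n:ℝ) * (1 - L / (n:ℝ)) ^ (n - 1) := by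
        exact mul_le_mul_of_nonneg_left hpow (le_of_lt hn')
end

section
/- Let P, K, x, m be natural numbers with x + 1 ≤ K ≤ P and P + x ≥ 3K. For a natural number y define (as a real number) P_y := C(P, y) · C(P − y, K − y) · C(P − K, K − y) · C(P − 2K + y, K)^m / C(P, K)^{2+m}. Then P_{x+1} ≠ 0 and P_x / P_{x+1} = [ (x+1)(P − 2K + x + 1) / (K − x)² ] · [ (P − 3K + x + 1)/(P − 2K + x + 1) ]^m. -/
/-- `Pjoint P K m y` is (up to the common normalization) the probability that two nodes
sharing exactly `y` keys are jointly isolated from `m` nodes in the intersection region. -/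
noncomputable def Pjoint (P K m y : ℕ) : ℝ :=
  ((P.choose y : ℝ) * ((P - y).choose (K - y) : ℝ) * ((P - K).choose (K - y) : ℝ) *
      ((P - 2 * K + y).choose K : ℝ) ^ m) /
    ((P.choose K : ℝ)) ^ (2 + m)

theorem Pjoint_ratio (P K x m : ℕ) (hx : x + 1 ≤ K) (hKP : K ≤ P) (h3K : 3 * K ≤ P + x) :
    Pjoint P K m (x + 1) ≠ 0 ∧
    Pjoint P K m x / Pjoint P K m (x + 1) =
      ((x : ℝ) + 1) * ((P : ℝ) - 2 * (K : ℝ) + (x : ℝ) + 1) / ((K : ℝ) - (x : ℝ)) ^ 2 *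
        (((P : ℝ) - 3 * (K : ℝ) + (x : ℝ) + 1) / ((P : ℝ) - 2 * (K : ℝ) + (x : ℝ) + 1)) ^ m := by
  have hx1P : x + 1 ≤ P := le_trans hx hKP
  have hxP : x ≤ P := by omega
  have hxK : x ≤ K := by omega
  have h2K : 2 * K ≤ P := by omega
  have hc1 : (0:ℝ) < (P.choose (x+1) : ℝ) :=
    Nat.cast_pos.mpr (Nat.choose_pos hx1P)
  have hc2 : (0:ℝ) < ((P - (x+1)).choose (K - (x+1)) : ℝ) :=
    Nat.cast_pos.mpr (Nat.choose_pos (by omega))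
  have hc3 : (0:ℝ) < ((P - K).choose (K - (x+1)) : ℝ) :=
    Nat.cast_pos.mpr (Nat.choose_pos (by omega))
  have hc4 : (0:ℝ) < ((P - 2 * K + (x+1)).choose K : ℝ) :=
    Nat.cast_pos.mpr (Nat.choose_pos (by omega))
  have hcK : (0:ℝ) < (P.choose K : ℝ) :=
    Nat.cast_pos.mpr (Nat.choose_pos hKP)
  have hP1 : Pjoint P K m (x + 1) ≠ 0 := by
    unfold Pjoint
    exact div_ne_zero (by positivity) (by positivity)
  refine ⟨hP1, ?_⟩
  have hB : ((P:ℝ) - x) ≠ 0 := by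
    have : (x:ℝ) < (P:ℝ) := by exact_mod_cast (by omega : x < P)
    linarith
  have hC : ((K:ℝ) - x) ≠ 0 := by
    have : (x:ℝ) < (K:ℝ) := by exact_mod_cast (by omega : x < K)
    linarith
  have hD : ((P:ℝ) - 2*K + x + 1) ≠ 0 := by
    have h' : (2*K:ℕ) ≤ P + x := by omega
    have : (2*(K:ℝ)) ≤ (P:ℝ) + x := by exact_mod_cast h'
    linarith
  -- the four ratio identities, cast to ℝ
  have h1 : (P.choose (x+1) : ℝ) * ((x:ℝ)+1) = (P.choose x : ℝ) * ((P:ℝ) - x) := by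
    have hn := Nat.choose_succ_right_eq P x
    have hcast : ((P.choose (x+1) * (x+1) : ℕ) : ℝ) = ((P.choose x * (P - x) : ℕ) : ℝ) := by
      exact_mod_cast congrArg (Nat.cast : ℕ → ℝ) hn
    push_cast [Nat.cast_sub hxP] at hcast
    linarith [hcast]
  have h2 : ((P:ℝ) - x) * ((P - (x+1)).choose (K - (x+1)) : ℝ)
      = ((P - x).choose (K - x) : ℝ) * ((K:ℝ) - x) := by
    have hn := Nat.add_one_mul_choose_eq (P - (x+1)) (K - (x+1))
    have e1 : P - (x+1) + 1 = P - x := by omega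
    have e2 : K - (x+1) + 1 = K - x := by omega
    rw [e1, e2] at hn
    have hcast : (((P - x) * (P - (x+1)).choose (K - (x+1)) : ℕ) : ℝ)
        = (((P - x).choose (K - x) * (K - x) : ℕ) : ℝ) := by exact_mod_cast hn
    push_cast [Nat.cast_sub hxP, Nat.cast_sub hxK] at hcast
    linarith [hcast]
  have h3 : ((P - K).choose (K - x) : ℝ) * ((K:ℝ) - x)
      = ((P - K).choose (K - (x+1)) : ℝ) * ((P:ℝ) - 2*K + x + 1) := by
    have hn := Nat.choose_succ_right_eq (P - K) (K - (x+1))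
    have e2 : K - (x+1) + 1 = K - x := by omega
    have e3 : P - K - (K - (x+1)) = P - 2*K + (x+1) := by omega
    rw [e2, e3] at hn
    have hcast : (((P - K).choose (K - x) * (K - x) : ℕ) : ℝ)
        = (((P - K).choose (K - (x+1)) * (P - 2*K + (x+1)) : ℕ) : ℝ) := by
      exact_mod_cast hn
    push_cast [Nat.cast_sub hxK, Nat.cast_sub h2K] at hcast
    linarith [hcast]
  have h4 : ((P - 2*K + x).choose K : ℝ) * ((P:ℝ) - 2*K + x + 1)
      = ((P - 2*K + (x+1)).choose K : ℝ) * ((P:ℝ) - 3*K + x + 1) := by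
    have hn := Nat.choose_mul_succ_eq (P - 2*K + x) K
    have e1 : P - 2*K + x + 1 = P - 2*K + (x+1) := by omega
    have e2 : P - 2*K + (x+1) - K = P + x + 1 - 3*K := by omega
    rw [e1, e2] at hn
    have hcast : (((P - 2*K + x).choose K * (P - 2*K + (x+1)) : ℕ) : ℝ)
        = (((P - 2*K + (x+1)).choose K * (P + x + 1 - 3*K) : ℕ) : ℝ) := by
      exact_mod_cast hn
    push_cast [Nat.cast_sub h2K, Nat.cast_sub (show 3*K ≤ P + x + 1 by omega)] at hcast
    linarith [hcast]
  have h4m : ((P - 2*K + x).choose K : ℝ)^m * ((P:ℝ) - 2*K + x + 1)^m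
      = ((P - 2*K + (x+1)).choose K : ℝ)^m * ((P:ℝ) - 3*K + x + 1)^m := by
    rw [← mul_pow, ← mul_pow, h4]
  set c1 := (P.choose x : ℝ) with hc1'
  set c2 := ((P - x).choose (K - x) : ℝ)
  set c3 := ((P - K).choose (K - x) : ℝ)
  set c4 := ((P - 2*K + x).choose K : ℝ)
  set d1 := (P.choose (x+1) : ℝ)
  set d2 := ((P - (x+1)).choose (K - (x+1)) : ℝ)
  set d3 := ((P - K).choose (K - (x+1)) : ℝ)
  set d4 := ((P - 2*K + (x+1)).choose K : ℝ)
  set A := ((x:ℝ) + 1) with hA'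
  set B := ((P:ℝ) - x)
  set C := ((K:ℝ) - x)
  set D := ((P:ℝ) - 2*K + x + 1)
  set E := ((P:ℝ) - 3*K + x + 1)
  have TB : (c1 * c2 * c3 * c4^m) * (C * C * D^m) * B
      = (d1 * d2 * d3 * d4^m) * (A * D * E^m) * B := by
    linear_combination (-(c2 * c3 * c4^m * C * C * D^m)) * h1
      - (d1 * A * c3 * c4^m * C * D^m) * h2
      + (d1 * A * B * d2 * c4^m * D^m) * h3
      + (d1 * A * B * d2 * d3 * D) * h4m
  have T : (c1 * c2 * c3 * c4^m) * (C * C * D^m)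
      = (d1 * d2 * d3 * d4^m) * (A * D * E^m) :=
    mul_right_cancel₀ hB TB
  unfold Pjoint
  have hN1 : d1 * d2 * d3 * d4^m ≠ 0 := by positivity
  have hCk : ((P.choose K : ℝ))^(2+m) ≠ 0 := by positivity
  rw [div_div_div_comm, div_self hCk, div_one, div_pow, div_mul_div_comm,
    div_eq_div_iff hN1 (by positivity)]
  linear_combination T
end
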